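/- Let p be prime and F ∈ ℤ[x_0,…,x_n] a form of degree d with v_p(F) = 0 that is unstable at p for the weight system (E, w), where w = (w_0,…,w_n) with 0 = w_0 ≤ w_1 ≤ … ≤ w_n. Then w_n > 0, and for each k with (n+1)w_k ≤ Σw (where Σw = w_0+…+w_n), every monomial x^i of F whose total degree in x_{k+1},…,x_n is less than m_k = ⌊(d/(n+1))·(Σw − (n+1)w_k)/(w_n − w_k)⌋ + 1 has coefficient divisible by p. Equivalently, the reduction F̄ lies in the m_k-th power of the ideal ⟨x_{k+1},…,x_n⟩ ⊆ 𝔽_p[x_0,…,x_n], i.e., the hypersurface F̄ = 0 contains the linear subspace x_{k+1} = … = x_n = 0 with multiplicity at least m_k. -/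

import Mathlib

open MvPolynomial

private theorem coeff_aeval_scale' (p : ℕ) (n : ℕ) (w : Fin (n+1) → ℕ)
    (F : MvPolynomial (Fin (n+1)) ℤ) (i : Fin (n+1) →₀ ℕ) :
    (aeval (fun j => (p : ℤ) ^ (w j) • (X j : MvPolynomial (Fin (n + 1)) ℤ)) F).coeff i
      = F.coeff i * (p:ℤ) ^ (∑ j, w j * i j) := by
  have main : (aeval (fun j => (p : ℤ) ^ (w j) • (X j : MvPolynomial (Fin (n + 1)) ℤ)) F).coeff i
      = F.coeff i * ∏ j, ((p:ℤ) ^ (w j)) ^ i j := by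
    induction F using MvPolynomial.induction_on' with
    | monomial u a =>
      rw [aeval_monomial, Finsupp.prod]
      simp only [smul_pow, smul_eq_C_mul, mul_pow, ← C_pow, Finset.prod_mul_distrib, ← map_prod]
      rw [← mul_assoc, algebraMap_eq, ← map_mul]
      have h2 : (∏ j ∈ u.support, (X j : MvPolynomial (Fin (n+1)) ℤ) ^ u j)
          = u.prod fun j e => X j ^ e := by rw [Finsupp.prod]
      rw [h2, ← monomial_eq, coeff_monomial, coeff_monomial]
      by_cases h : u = i
      · subst h
        simp only [if_pos rfl]
        show (a * ∏ j ∈ u.support, ((p:ℤ) ^ w j) ^ u j) = a * ∏ j, ((p:ℤ) ^ w j) ^ u j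
        congr 1
        refine Finset.prod_subset (Finset.subset_univ _) fun j _ hj => ?_
        rw [Finsupp.notMem_support_iff.mp hj, pow_zero]
      · simp [h]
    | add φ ψ hφ hψ => simp only [map_add, coeff_add, hφ, hψ, add_mul]
  rw [main]
  congr 1
  simp_rw [← pow_mul]
  rw [Finset.prod_pow_eq_pow_sum]


/-- Let `F` be a form of degree `d` in `n+1` variables with `v_p(F) = 0` that is
unstable at `p` for the weight system `(E, w)` with `0 = w_0 ≤ w_1 ≤ … ≤ w_n` (i.e.
`v_p(F(p^{w_0}x_0,…,p^{w_n}x_n)) > (d/(n+1))·Σw`).  Then `w_n > 0`, and for each `k` with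
`(n+1)w_k ≤ Σw`, every monomial of `F` whose total degree in `x_{k+1},…,x_n` is less than
`m_k = ⌊(d/(n+1))·(Σw − (n+1)w_k)/(w_n − w_k)⌋ + 1` has coefficient divisible by `p`
(equivalently, `F̄` lies in `⟨x_{k+1},…,x_n⟩^{m_k}`). -/
theorem stmt_15 (p n d : ℕ) (hp : p.Prime)
    (F : MvPolynomial (Fin (n + 1)) ℤ) (hF : F.IsHomogeneous d)
    (hprim : ¬ ∀ m, (p : ℤ) ∣ F.coeff m)
    (w : Fin (n + 1) → ℕ) (h0 : w 0 = 0) (hmono : Monotone w)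
    (hunst : ∀ m ∈ (aeval (fun j => (p : ℤ) ^ (w j) •
        (X j : MvPolynomial (Fin (n + 1)) ℤ)) F).support,
      (d : ℤ) * (∑ j, (w j : ℤ)) < (n + 1) *
        padicValInt p ((aeval (fun j => (p : ℤ) ^ (w j) •
          (X j : MvPolynomial (Fin (n + 1)) ℤ)) F).coeff m)) :
    0 < w (Fin.last n) ∧
    ∀ k : Fin (n + 1), (n + 1) * w k ≤ ∑ j, w j →
      ∀ i ∈ F.support,
        (∑ j ∈ Finset.univ.filter (fun j => k < j), i j) <
          d * ((∑ j, w j) - (n + 1) * w k) / ((n + 1) * (w (Fin.last n) - w k)) + 1 →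
        (p : ℤ) ∣ F.coeff i := by
  haveI : Fact p.Prime := ⟨hp⟩
  have hpz : (p : ℤ) ≠ 0 := Int.natCast_ne_zero.mpr hp.ne_zero
  -- key: instability in terms of coefficients of F
  have key : ∀ i ∈ F.support, ¬ (p:ℤ) ∣ F.coeff i →
      d * (∑ j, w j) < (n + 1) * (∑ j, w j * i j) := by
    intro i hi hdvd
    have hai : F.coeff i ≠ 0 := mem_support_iff.mp hi
    have hc := coeff_aeval_scale' p n w F i
    have hmem : i ∈ (aeval (fun j => (p : ℤ) ^ (w j) •
        (X j : MvPolynomial (Fin (n + 1)) ℤ)) F).support := by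
      rw [mem_support_iff, hc]
      exact mul_ne_zero hai (pow_ne_zero _ hpz)
    have h := hunst i hmem
    rw [hc] at h
    have hval : padicValInt p (F.coeff i * (p:ℤ) ^ (∑ j, w j * i j))
        = ∑ j, w j * i j := by
      rw [padicValInt.mul hai (pow_ne_zero _ hpz),
        padicValInt.eq_zero_of_not_dvd hdvd, zero_add]
      have : ((p:ℤ)) ^ (∑ j, w j * i j) = ((p ^ (∑ j, w j * i j) : ℕ) : ℤ) := by push_cast; ring
      rw [this, padicValInt.of_nat, padicValNat.prime_pow]
    rw [hval] at h
    have := h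
    push_cast at this ⊢
    exact_mod_cast h
  -- degrees
  have hdeg : ∀ i ∈ F.support, ∑ j, i j = d := by
    intro i hi
    have h := hF (mem_support_iff.mp hi)
    simp only [Finsupp.weight_apply, Finsupp.sum, Pi.one_apply, smul_eq_mul, mul_one] at h
    rw [← h]
    exact (Finset.sum_subset (Finset.subset_univ _) fun j _ hj =>
      Finsupp.notMem_support_iff.mp hj).symm
  -- there is a coefficient not divisible by p
  push_neg at hprim
  obtain ⟨i₀, hi₀⟩ := hprim
  have hi₀s : i₀ ∈ F.support := mem_support_iff.mpr (fun h => hi₀ (h ▸ dvd_zero _))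
  have hwlast : 0 < w (Fin.last n) := by
    by_contra hwl
    push_neg at hwl
    have hz : ∀ j, w j = 0 := fun j => Nat.le_antisymm
      (le_trans (hmono (Fin.le_last j)) hwl) (Nat.zero_le _)
    have := key i₀ hi₀s hi₀
    simp [hz] at this
  refine ⟨hwlast, ?_⟩
  intro k hk i hi hs
  by_contra hdvd
  have hkey := key i hi hdvd
  have hdi := hdeg i hi
  set S := ∑ j, w j with hS
  set E := ∑ j, w j * i j with hE
  set s := ∑ j ∈ Finset.univ.filter (fun j => k < j), i j with hs'
  set t := ∑ j ∈ Finset.univ.filter (fun j => ¬ k < j), i j with ht'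
  have hts : s + t = d := by
    rw [hs', ht', ← hdi]
    exact Finset.sum_filter_add_sum_filter_not _ _ _
  have hWK : w k ≤ w (Fin.last n) := hmono (Fin.le_last k)
  -- bound E
  have hEb : E ≤ w (Fin.last n) * s + w k * t := by
    rw [hE, ← Finset.sum_filter_add_sum_filter_not Finset.univ (fun j => k < j)
      (fun j => w j * i j), hs', ht', Finset.mul_sum, Finset.mul_sum]
    gcongr with j hj j hj
    · exact hmono (Fin.le_last j)
    · simp only [Finset.mem_filter, not_lt] at hj
      exact hmono hj.2
  -- strict inequality between w k and w last
  have hlt : w k < w (Fin.last n) := by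
    rcases Nat.lt_or_ge (w k) (w (Fin.last n)) with h | h
    · exact h
    · exfalso
      have hWeq : w (Fin.last n) = w k := le_antisymm h hWK
      rw [hWeq] at hEb
      have h1 : E ≤ w k * d := by
        calc E ≤ w k * s + w k * t := hEb
        _ = w k * d := by rw [← hts]; ring
      nlinarith [hkey, Nat.mul_le_mul_left d hk]
  -- main numeric inequality
  have hmain : d * (S - (n + 1) * w k) < s * ((n + 1) * (w (Fin.last n) - w k)) := by
    zify [hk, hWK, hlt.le]
    have hkey' : (d : ℤ) * S < (n+1) * E := by exact_mod_cast hkey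
    have hEb' : (E : ℤ) ≤ w (Fin.last n) * s + w k * t := by exact_mod_cast hEb
    have hts' : (s : ℤ) + t = d := by exact_mod_cast hts
    nlinarith [hkey', hEb', hts']
  have hD : 0 < (n + 1) * (w (Fin.last n) - w k) :=
    Nat.mul_pos (Nat.succ_pos n) (Nat.sub_pos_of_lt hlt)
  have := (Nat.div_lt_iff_lt_mul hD).mpr hmain
  omega
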